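/- arXiv:1205.4704 — 2 statements merged into one kernel-verified Lean document; each statement's English description precedes it below -/
import Mathlib

section
/- For every f in the Hardy–Sobolev space H^{1,2} of the unit disk, ‖f‖_∞ ≤ √(π+1) · ‖f‖_{1,2}, where ‖f‖_∞ is the sup norm on the closed unit disk and ‖f‖_{1,2}² = ‖f‖₂² + ‖f'‖₂². -/
open Complex Metric Set MeasureTheory intervalIntegral Real Filter Topology

private lemma cs_point (z w : ℂ) : |2*(z.re*w.re + z.im*w.im)| ≤ ‖z‖^2 + ‖w‖^2 := by
  rw [Complex.sq_norm, Complex.sq_norm,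
    Complex.normSq_apply, Complex.normSq_apply, abs_le]
  constructor <;> nlinarith [sq_nonneg (z.re + w.re), sq_nonneg (z.im + w.im),
    sq_nonneg (z.re - w.re), sq_nonneg (z.im - w.im)]

private lemma circle_bound (f : ℂ → ℂ) (hd : DifferentiableOn ℂ f (Metric.ball 0 1))
    (hc : ContinuousOn f (Metric.closedBall 0 1))
    (hc' : ContinuousOn (deriv f) (Metric.closedBall 0 1))
    {r : ℝ} (hr0 : 0 < r) (hr1 : r < 1) (θ₀ : ℝ) :
    ‖f ((r:ℂ) * Complex.exp ((θ₀:ℂ) * Complex.I))‖^2 ≤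
      (1/(2*Real.pi)) * (∫ θ in (0:ℝ)..2*Real.pi, ‖f ((r:ℂ)*Complex.exp ((θ:ℂ)*Complex.I))‖^2)
      + (1/2) * (∫ θ in (0:ℝ)..2*Real.pi,
          (‖f ((r:ℂ)*Complex.exp ((θ:ℂ)*Complex.I))‖^2
           + ‖deriv f ((r:ℂ)*Complex.exp ((θ:ℂ)*Complex.I))‖^2)) := by
  have pi_pos := Real.pi_pos
  set c : ℝ → ℂ := fun θ => (r:ℂ) * Complex.exp ((θ:ℂ) * Complex.I) with hc_def
  have hnormc : ∀ θ, ‖c θ‖ = r := by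
    intro θ
    simp [hc_def, map_mul, Complex.norm_exp_ofReal_mul_I,
      Complex.norm_real, abs_of_pos hr0]
  have hmemb : ∀ θ, c θ ∈ Metric.ball (0:ℂ) 1 := by
    intro θ; simp [Metric.mem_ball, dist_eq_norm, hnormc θ, hr1]
  have hmemcb : ∀ θ, c θ ∈ Metric.closedBall (0:ℂ) 1 := fun θ =>
    Metric.ball_subset_closedBall (hmemb θ)
  have hcont_c : Continuous c := by
    exact continuous_const.mul (Complex.continuous_exp.comp (Complex.continuous_ofReal.mul continuous_const))
  set g : ℝ → ℂ := fun θ => f (c θ) with hg_def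
  set G : ℝ → ℂ := fun θ => deriv f (c θ) * ((r:ℂ) * (Complex.exp ((θ:ℂ) * Complex.I) * Complex.I)) with hG_def
  have hgd : ∀ θ, HasDerivAt g (G θ) θ := by
    intro θ
    have h1 : HasDerivAt (fun t : ℝ => (t:ℂ)) 1 θ := Complex.ofRealCLM.hasDerivAt
    have h2 : HasDerivAt (fun t : ℝ => (t:ℂ) * Complex.I) Complex.I θ := by
      simpa using h1.mul_const Complex.I
    have h3 := h2.cexp
    have h4 : HasDerivAt c ((r:ℂ) * (Complex.exp ((θ:ℂ) * Complex.I) * Complex.I)) θ :=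
      h3.const_mul _
    have hfd : DifferentiableAt ℂ f (c θ) :=
      (hd.differentiableAt (Metric.isOpen_ball.mem_nhds (hmemb θ)))
    have h5 := hfd.hasDerivAt.scomp θ h4
    refine h5.congr_deriv ?_
    simp [hG_def, smul_eq_mul]; ring
  set h : ℝ → ℝ := fun θ => ‖g θ‖^2 with hh_def
  set H : ℝ → ℝ := fun θ => 2*((g θ).re*(G θ).re + (g θ).im*(G θ).im) with hH_def
  have hhd : ∀ θ, HasDerivAt h (H θ) θ := by
    intro θ
    have hre : HasDerivAt (fun t => (g t).re) (G θ).re θ :=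
      Complex.reCLM.hasFDerivAt.comp_hasDerivAt θ (hgd θ)
    have him : HasDerivAt (fun t => (g t).im) (G θ).im θ :=
      Complex.imCLM.hasFDerivAt.comp_hasDerivAt θ (hgd θ)
    have hder := ((hre.pow 2).add (him.pow 2))
    have heq : h = fun t => (g t).re^2 + (g t).im^2 := by
      funext t
      show ‖g t‖^2 = _
      rw [Complex.sq_norm, Complex.normSq_apply]; ring
    rw [heq]
    refine hder.congr_deriv ?_
    push_cast; ring
  set P : ℝ → ℝ := fun θ => ‖g θ‖^2 + ‖deriv f (c θ)‖^2 with hP_def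
  have hGnorm : ∀ θ, ‖G θ‖ ≤ ‖deriv f (c θ)‖ := by
    intro θ
    rw [hG_def]
    simp only [norm_mul, Complex.norm_real, Real.norm_eq_abs, Complex.norm_exp_ofReal_mul_I,
      Complex.norm_I]
    rw [abs_of_pos hr0]
    nlinarith [norm_nonneg (deriv f (c θ))]
  have hHb : ∀ θ, |H θ| ≤ P θ := by
    intro θ
    refine (cs_point (g θ) (G θ)).trans ?_
    have : ‖G θ‖^2 ≤ ‖deriv f (c θ)‖^2 := by
      have := hGnorm θ
      nlinarith [norm_nonneg (G θ)]
    simp only [hP_def]; linarith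
  -- continuity
  have hgc : Continuous g := hc.comp_continuous hcont_c hmemcb
  have hGc : Continuous G := ((hc'.comp_continuous hcont_c hmemcb).mul (by continuity))
  have hhc : Continuous h := (hgc.norm).pow 2
  have hHc : Continuous H :=
    continuous_const.mul (((Complex.continuous_re.comp hgc).mul (Complex.continuous_re.comp hGc)).add
      ((Complex.continuous_im.comp hgc).mul (Complex.continuous_im.comp hGc)))
  have hPc : Continuous P := hhc.add ((hc'.comp_continuous hcont_c hmemcb).norm.pow 2)
  -- periodicity
  have hper_c : Function.Periodic c (2*Real.pi) := by
    intro θ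
    simp only [hc_def]
    congr 1
    push_cast
    rw [add_mul, Complex.exp_add]
    simp [Complex.exp_two_pi_mul_I]
  have hper_h : Function.Periodic h (2*Real.pi) := by
    intro θ; simp only [hh_def, hg_def, hper_c θ]
  have hper_P : Function.Periodic P (2*Real.pi) := by
    intro θ; simp only [hP_def, hg_def, hper_c θ]
  -- min point
  obtain ⟨θs, hθs, hmin⟩ := isCompact_Icc.exists_isMinOn
    (Set.nonempty_Icc.2 (by linarith)) (hhc.continuousOn (s := Set.Icc θ₀ (θ₀ + 2*Real.pi)))
  have hθs1 : θ₀ ≤ θs := hθs.1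
  have hθs2 : θs ≤ θ₀ + 2*Real.pi := hθs.2
  -- mean bound
  have hmean : h θs ≤ (1/(2*Real.pi)) * ∫ θ in θ₀..(θ₀+2*Real.pi), h θ := by
    have hint : ∫ θ in θ₀..(θ₀+2*Real.pi), h θs ≤ ∫ θ in θ₀..(θ₀+2*Real.pi), h θ := by
      apply intervalIntegral.integral_mono_on (by linarith)
        intervalIntegrable_const (hhc.intervalIntegrable _ _)
      intro x hx; exact hmin hx
    rw [intervalIntegral.integral_const] at hint
    simp only [add_sub_cancel_left, smul_eq_mul] at hint
    rw [div_mul_eq_mul_div, le_div_iff₀ (by linarith)]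
    linarith
  -- FTC
  have e1 : ∫ θ in θ₀..θs, H θ = h θs - h θ₀ :=
    intervalIntegral.integral_eq_sub_of_hasDerivAt (fun x _ => hhd x)
      (hHc.intervalIntegrable _ _)
  have e2 : ∫ θ in θs..(θ₀+2*Real.pi), H θ = h θ₀ - h θs := by
    have := intervalIntegral.integral_eq_sub_of_hasDerivAt (a := θs) (b := θ₀+2*Real.pi)
      (fun x _ => hhd x) (hHc.intervalIntegrable _ _)
    rw [this]
    have : h (θ₀ + 2*Real.pi) = h θ₀ := hper_h θ₀
    rw [this]
  have b1 : |∫ θ in θ₀..θs, H θ| ≤ ∫ θ in θ₀..θs, |H θ| :=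
    intervalIntegral.abs_integral_le_integral_abs hθs1
  have b2 : |∫ θ in θs..(θ₀+2*Real.pi), H θ| ≤ ∫ θ in θs..(θ₀+2*Real.pi), |H θ| :=
    intervalIntegral.abs_integral_le_integral_abs hθs2
  have m1 : ∫ θ in θ₀..θs, |H θ| ≤ ∫ θ in θ₀..θs, P θ :=
    intervalIntegral.integral_mono_on hθs1 (hHc.abs.intervalIntegrable _ _)
      (hPc.intervalIntegrable _ _) (fun x _ => hHb x)
  have m2 : ∫ θ in θs..(θ₀+2*Real.pi), |H θ| ≤ ∫ θ in θs..(θ₀+2*Real.pi), P θ :=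
    intervalIntegral.integral_mono_on hθs2 (hHc.abs.intervalIntegrable _ _)
      (hPc.intervalIntegrable _ _) (fun x _ => hHb x)
  have madd : (∫ θ in θ₀..θs, P θ) + (∫ θ in θs..(θ₀+2*Real.pi), P θ)
      = ∫ θ in θ₀..(θ₀+2*Real.pi), P θ :=
    intervalIntegral.integral_add_adjacent_intervals (hPc.intervalIntegrable _ _)
      (hPc.intervalIntegrable _ _)
  have key : h θ₀ ≤ h θs + (1/2) * ∫ θ in θ₀..(θ₀+2*Real.pi), P θ := by
    have h2 : 2 * (h θ₀ - h θs) ≤ ∫ θ in θ₀..(θ₀+2*Real.pi), P θ := by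
      have l1 : h θ₀ - h θs ≤ ∫ θ in θ₀..θs, P θ := by
        have : -(h θs - h θ₀) ≤ |∫ θ in θ₀..θs, H θ| := by
          rw [e1]; exact neg_le_abs _
        linarith
      have l2 : h θ₀ - h θs ≤ ∫ θ in θs..(θ₀+2*Real.pi), P θ := by
        have : h θ₀ - h θs ≤ |∫ θ in θs..(θ₀+2*Real.pi), H θ| := by
          rw [e2]; exact le_abs_self _
        linarith
      linarith
    linarith
  -- shift integrals to 0..2π
  have sh : ∀ (u : ℝ → ℝ), Function.Periodic u (2*Real.pi) →
      ∫ θ in θ₀..(θ₀+2*Real.pi), u θ = ∫ θ in (0:ℝ)..2*Real.pi, u θ := by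
    intro u hu
    have := hu.intervalIntegral_add_eq θ₀ 0
    simpa using this
  have goal0 : h θ₀ ≤ (1/(2*Real.pi)) * (∫ θ in (0:ℝ)..2*Real.pi, h θ)
      + (1/2) * ∫ θ in (0:ℝ)..2*Real.pi, P θ := by
    rw [← sh h hper_h, ← sh P hper_P]
    linarith
  exact goal0



/-- L² integral mean of `f` on the circle of radius `r` centered at 0. -/
noncomputable def M2 (f : ℂ → ℂ) (r : ℝ) : ℝ :=
  Real.sqrt ((1 / (2 * Real.pi)) *
    ∫ θ in (0:ℝ)..(2 * Real.pi), ‖f ((r : ℂ) * Complex.exp ((θ : ℂ) * Complex.I))‖ ^ 2)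

/-- Normalized L² norm of `f` on the boundary arc {e^{iθ} : θ₀ ≤ θ ≤ θ₀ + 2πλ}. -/
noncomputable def arcN (f : ℂ → ℂ) (θ₀ lam : ℝ) : ℝ :=
  Real.sqrt ((1 / (2 * Real.pi * lam)) *
    ∫ θ in θ₀..(θ₀ + 2 * Real.pi * lam), ‖f (Complex.exp ((θ : ℂ) * Complex.I))‖ ^ 2)

/-- Model of membership in the Hardy–Sobolev space `H^{k,2}` of the unit disk:
`f` is analytic on the open disk and its derivatives up to order `k`
extend continuously to the closed disk. -/
def HkModel (k : ℕ) (f : ℂ → ℂ) : Prop :=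
  DifferentiableOn ℂ f (Metric.ball (0:ℂ) 1) ∧
  ∀ j ≤ k, ContinuousOn (iteratedDeriv j f) (Metric.closedBall (0:ℂ) 1)

/-- Hardy–Sobolev norm `‖f‖_{k,2}` (boundary L² norms of derivatives). -/
noncomputable def sobN (k : ℕ) (f : ℂ → ℂ) : ℝ :=
  Real.sqrt (∑ j ∈ Finset.range (k + 1), (M2 (iteratedDeriv j f) 1) ^ 2)

/-- `W^{m,2}(I)` Sobolev norm on the arc (angular derivatives). -/
noncomputable def wN (m : ℕ) (f : ℂ → ℂ) (θ₀ lam : ℝ) : ℝ :=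
  Real.sqrt (∑ j ∈ Finset.range (m + 1), (1 / (2 * Real.pi * lam)) *
    ∫ θ in θ₀..(θ₀ + 2 * Real.pi * lam),
      ‖iteratedDeriv j (fun t : ℝ => f (Complex.exp ((t : ℂ) * Complex.I))) θ‖ ^ 2)

/-- Sup norm bound in `H^{1,2}`: `‖f‖_∞ ≤ √(π+1) ‖f‖_{1,2}`. -/
theorem sup_le_sobolev (f : ℂ → ℂ) (hf : HkModel 1 f) :
    ∀ z ∈ Metric.closedBall (0:ℂ) 1,
      ‖f z‖ ≤ Real.sqrt (Real.pi + 1) * sobN 1 f := by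
  obtain ⟨hd, hcont⟩ := hf
  have pi_pos := Real.pi_pos
  have hc : ContinuousOn f (Metric.closedBall (0:ℂ) 1) := by
    simpa [iteratedDeriv_zero] using hcont 0 (by norm_num)
  have hc' : ContinuousOn (deriv f) (Metric.closedBall (0:ℂ) 1) := by
    simpa [iteratedDeriv_one] using hcont 1 le_rfl
  -- clamp
  set cl : ℝ → ℝ := fun r => max 0 (min r 1) with hcl_def
  have hclcont : Continuous cl := continuous_const.max (continuous_id.min continuous_const)
  have hcl01 : ∀ r, 0 ≤ cl r ∧ cl r ≤ 1 := fun r =>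
    ⟨le_max_left _ _, max_le zero_le_one (min_le_right _ _)⟩
  have hclr : ∀ r, 0 ≤ r → r ≤ 1 → cl r = r := by
    intro r h0 h1; simp [hcl_def, min_eq_left h1, max_eq_right h0]
  -- the parametrized boundary map
  set ψ : ℝ × ℝ → ℂ := fun p => ((cl p.1 : ℝ) : ℂ) * Complex.exp ((p.2 : ℂ) * Complex.I)
    with hψ_def
  have hψcont : Continuous ψ :=
    (Complex.continuous_ofReal.comp (hclcont.comp continuous_fst)).mul
      (Complex.continuous_exp.comp ((Complex.continuous_ofReal.comp continuous_snd).mul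
        continuous_const))
  have hψmem : ∀ p, ψ p ∈ Metric.closedBall (0:ℂ) 1 := by
    intro p
    simp only [Metric.mem_closedBall, dist_zero_right, hψ_def, norm_mul,
      Complex.norm_real, Real.norm_eq_abs, Complex.norm_exp_ofReal_mul_I, mul_one]
    rw [_root_.abs_of_nonneg (hcl01 p.1).1]
    exact (hcl01 p.1).2
  -- parametrized integrals
  set A : ℝ → ℝ := fun r => ∫ θ in (0:ℝ)..2*Real.pi,
      ‖f (((cl r : ℝ):ℂ) * Complex.exp ((θ:ℂ) * Complex.I))‖^2 with hA_def
  set S : ℝ → ℝ := fun r => ∫ θ in (0:ℝ)..2*Real.pi,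
      (‖f (((cl r : ℝ):ℂ) * Complex.exp ((θ:ℂ) * Complex.I))‖^2
       + ‖deriv f (((cl r : ℝ):ℂ) * Complex.exp ((θ:ℂ) * Complex.I))‖^2) with hS_def
  have hucont : Continuous (Function.uncurry (fun r θ : ℝ =>
      ‖f (((cl r : ℝ):ℂ) * Complex.exp ((θ:ℂ) * Complex.I))‖^2)) := by
    exact ((hc.comp_continuous hψcont hψmem).norm.pow 2)
  have hu'cont : Continuous (Function.uncurry (fun r θ : ℝ =>
      ‖f (((cl r : ℝ):ℂ) * Complex.exp ((θ:ℂ) * Complex.I))‖^2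
      + ‖deriv f (((cl r : ℝ):ℂ) * Complex.exp ((θ:ℂ) * Complex.I))‖^2)) := by
    exact ((hc.comp_continuous hψcont hψmem).norm.pow 2).add
      ((hc'.comp_continuous hψcont hψmem).norm.pow 2)
  have hAcont : Continuous A :=
    intervalIntegral.continuous_parametric_intervalIntegral_of_continuous' hucont 0 (2*Real.pi)
  have hScont : Continuous S :=
    intervalIntegral.continuous_parametric_intervalIntegral_of_continuous' hu'cont 0 (2*Real.pi)
  -- bound on the open ball
  have hball : ∀ z ∈ Metric.ball (0:ℂ) 1,
      ‖f z‖ ≤ Real.sqrt ((1/(2*Real.pi)) * A 1 + (1/2) * S 1) := by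
    intro z hz
    have hz1 : ‖z‖ < 1 := by simpa [dist_zero_right] using hz
    have key : ∀ r ∈ Set.Ioo ‖z‖ 1,
        ‖f z‖ ≤ Real.sqrt ((1/(2*Real.pi)) * A r + (1/2) * S r) := by
      rintro r ⟨hrz, hr1⟩
      have hr0 : 0 < r := lt_of_le_of_lt (norm_nonneg z) hrz
      have hclreq : cl r = r := hclr r hr0.le hr1.le
      have hAr : A r = ∫ θ in (0:ℝ)..2*Real.pi,
          ‖f ((r:ℂ) * Complex.exp ((θ:ℂ) * Complex.I))‖^2 := by
        simp only [hA_def, hclreq]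
      have hSr : S r = ∫ θ in (0:ℝ)..2*Real.pi,
          (‖f ((r:ℂ) * Complex.exp ((θ:ℂ) * Complex.I))‖^2
           + ‖deriv f ((r:ℂ) * Complex.exp ((θ:ℂ) * Complex.I))‖^2) := by
        simp only [hS_def, hclreq]
      have hdc : DiffContOnCl ℂ f (Metric.ball (0:ℂ) r) :=
        ⟨hd.mono (Metric.ball_subset_ball hr1.le),
         hc.mono (closure_ball_subset_closedBall.trans
           (Metric.closedBall_subset_closedBall hr1.le))⟩
      refine Complex.norm_le_of_forall_mem_frontier_norm_le Metric.isBounded_ball hdc ?_ ?_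
      · intro w hw
        rw [frontier_ball (0:ℂ) (ne_of_gt hr0)] at hw
        have hwn : ‖w‖ = r := by simpa [dist_zero_right] using hw
        have habs : ‖w‖ = r := hwn
        have hwe : ((r:ℝ):ℂ) * Complex.exp ((w.arg : ℂ) * Complex.I) = w := by
          rw [← habs]; exact Complex.norm_mul_exp_arg_mul_I w
        have hb := circle_bound f hd hc hc' hr0 hr1 w.arg
        rw [hwe] at hb
        rw [hAr, hSr]
        calc ‖f w‖ = Real.sqrt (‖f w‖^2) := (Real.sqrt_sq (norm_nonneg _)).symm
          _ ≤ _ := Real.sqrt_le_sqrt hb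
      · exact subset_closure (by simpa [Metric.mem_ball, dist_zero_right] using hrz)
    -- pass to the limit r → 1⁻
    have hne : (𝓝[Set.Ioo ‖z‖ 1] (1:ℝ)).NeBot := by
      rw [← mem_closure_iff_nhdsWithin_neBot, closure_Ioo (ne_of_lt hz1)]
      exact ⟨hz1.le, le_rfl⟩
    have htend : Tendsto (fun r => Real.sqrt ((1/(2*Real.pi)) * A r + (1/2) * S r))
        (𝓝[Set.Ioo ‖z‖ 1] 1)
        (𝓝 (Real.sqrt ((1/(2*Real.pi)) * A 1 + (1/2) * S 1))) := by
      have : Continuous (fun r => Real.sqrt ((1/(2*Real.pi)) * A r + (1/2) * S r)) :=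
        ((continuous_const.mul hAcont).add (continuous_const.mul hScont)).sqrt
      exact (this.tendsto 1).mono_left nhdsWithin_le_nhds
    exact ge_of_tendsto htend (eventually_mem_nhdsWithin.mono (fun r hr => key r hr))
  -- identify the limit with the Sobolev norm
  have hcl1 : cl 1 = 1 := hclr 1 zero_le_one le_rfl
  set b : ℝ := ∫ θ in (0:ℝ)..2*Real.pi,
      ‖deriv f (((1:ℝ):ℂ) * Complex.exp ((θ:ℂ) * Complex.I))‖^2 with hb_def
  have hA1 : A 1 = ∫ θ in (0:ℝ)..2*Real.pi,
      ‖f (((1:ℝ):ℂ) * Complex.exp ((θ:ℂ) * Complex.I))‖^2 := by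
    simp only [hA_def, hcl1]
  have hψ1 : Continuous (fun θ : ℝ => ((1:ℝ):ℂ) * Complex.exp ((θ:ℂ) * Complex.I)) :=
    continuous_const.mul (Complex.continuous_exp.comp
      (Complex.continuous_ofReal.mul continuous_const))
  have hmem1 : ∀ θ : ℝ, ((1:ℝ):ℂ) * Complex.exp ((θ:ℂ) * Complex.I)
      ∈ Metric.closedBall (0:ℂ) 1 := by
    intro θ
    simp [Metric.mem_closedBall, dist_zero_right, norm_mul,
      Complex.norm_exp_ofReal_mul_I]
  have hcont1 : Continuous (fun θ : ℝ =>
      ‖f (((1:ℝ):ℂ) * Complex.exp ((θ:ℂ) * Complex.I))‖^2) :=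
    ((hc.comp_continuous hψ1 hmem1).norm.pow 2)
  have hcont2 : Continuous (fun θ : ℝ =>
      ‖deriv f (((1:ℝ):ℂ) * Complex.exp ((θ:ℂ) * Complex.I))‖^2) :=
    ((hc'.comp_continuous hψ1 hmem1).norm.pow 2)
  have hS1 : S 1 = A 1 + b := by
    simp only [hS_def, hA1, hb_def, hcl1]
    rw [intervalIntegral.integral_add (hcont1.intervalIntegrable _ _)
      (hcont2.intervalIntegrable _ _)]
  have hA1nn : 0 ≤ A 1 := by
    rw [hA1]
    apply intervalIntegral.integral_nonneg (by positivity)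
    intro x _; positivity
  have hbnn : 0 ≤ b := by
    rw [hb_def]
    apply intervalIntegral.integral_nonneg (by positivity)
    intro x _; positivity
  have hM2f : (M2 f 1)^2 = (1/(2*Real.pi)) * A 1 := by
    rw [M2, ← hA1, Real.sq_sqrt (mul_nonneg (by positivity) hA1nn)]
  have hM2df : (M2 (deriv f) 1)^2 = (1/(2*Real.pi)) * b := by
    rw [M2, ← hb_def, Real.sq_sqrt (mul_nonneg (by positivity) hbnn)]
  have hsob : sobN 1 f = Real.sqrt ((1/(2*Real.pi)) * A 1 + (1/(2*Real.pi)) * b) := by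
    rw [sobN, Finset.sum_range_succ, Finset.sum_range_one, iteratedDeriv_zero,
      iteratedDeriv_one, hM2f, hM2df]
  have halg : Real.sqrt ((1/(2*Real.pi)) * A 1 + (1/2) * S 1)
      ≤ Real.sqrt (Real.pi + 1) * sobN 1 f := by
    rw [hsob, ← Real.sqrt_mul (by positivity)]
    apply Real.sqrt_le_sqrt
    rw [hS1]
    have hdiff : (Real.pi+1) * ((1/(2*Real.pi)) * A 1 + (1/(2*Real.pi)) * b)
        - ((1/(2*Real.pi)) * A 1 + (1/2) * (A 1 + b)) = b * (1/(2*Real.pi)) := by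
      field_simp
      ring
    nlinarith [mul_nonneg hbnn (le_of_lt (by positivity : (0:ℝ) < 1/(2*Real.pi)))]
  -- conclude for all z in the closed ball
  intro z hz
  have hball' : ∀ w ∈ Metric.ball (0:ℂ) 1, ‖f w‖ ≤ Real.sqrt (Real.pi + 1) * sobN 1 f :=
    fun w hw => (hball w hw).trans halg
  have hzc : z ∈ closure (Metric.ball (0:ℂ) 1) := by
    rwa [closure_ball (0:ℂ) one_ne_zero]
  have hne : (𝓝[Metric.ball (0:ℂ) 1] z).NeBot :=
    mem_closure_iff_nhdsWithin_neBot.mp hzc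
  have htf : Tendsto f (𝓝[Metric.ball (0:ℂ) 1] z) (𝓝 (f z)) :=
    ((hc z hz).mono Metric.ball_subset_closedBall).tendsto
  exact le_of_tendsto htf.norm (eventually_mem_nhdsWithin.mono (fun w hw => hball' w hw))
end

section
/- Let a > 1 and let I be the semicircle {e^{iθ} : −π/2 ≤ θ ≤ π/2}. Set J_n = (1/π) ∫_{−π/2}^{π/2} (1 − 2a cos θ + a²)^n dθ. Then J_n = (πna)^{−1}(1 + a²)^{n+1}(1 + o(1)) as n → ∞. -/
open Filter Real intervalIntegral

private lemma integral_one_sub_mul_pow (β : ℝ) (hβ : β ≠ 0) (δ : ℝ) (n : ℕ) :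
    ∫ t in (0:ℝ)..δ, (1 - β * t) ^ n
      = (1 - (1 - β * δ) ^ (n + 1)) / (β * ((n : ℝ) + 1)) := by
  have hd : ∀ t ∈ Set.uIcc (0:ℝ) δ,
      HasDerivAt (fun t : ℝ => -(1 - β * t) ^ (n + 1) / (β * ((n : ℝ) + 1)))
        ((1 - β * t) ^ n) t := by
    intro t _
    have h1 : HasDerivAt (fun t : ℝ => 1 - β * t) (-β) t := by
      simpa using ((hasDerivAt_id t).const_mul β).const_sub 1
    have h2 := (h1.pow (n + 1)).neg.div_const (β * ((n : ℝ) + 1))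
    convert h2 using 1
    have hn : ((n : ℝ) + 1) ≠ 0 := by positivity
    · rfl
    · rfl
    · rfl
    rw [eq_div_iff (mul_ne_zero hβ (by positivity)), Nat.add_sub_cancel]
    push_cast
    ring
  rw [intervalIntegral.integral_eq_sub_of_hasDerivAt hd
    (by apply Continuous.intervalIntegrable; continuity)]
  field_simp
  ring

private lemma main_term_tendsto {β : ℝ} (hβ : 0 < β) {δ : ℝ} (h1 : |1 - β * δ| < 1) :
    Tendsto (fun n : ℕ => (n : ℝ) * ∫ t in (0:ℝ)..δ, (1 - β * t) ^ n)
      atTop (nhds (1 / β)) := by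
  have heq : ∀ n : ℕ, (n : ℝ) * ∫ t in (0:ℝ)..δ, (1 - β * t) ^ n
      = ((n : ℝ) / ((n : ℝ) + 1)) * ((1 - (1 - β * δ) ^ (n + 1)) / β) := by
    intro n
    rw [integral_one_sub_mul_pow β hβ.ne' δ n, mul_div_assoc', div_mul_div_comm,
      mul_comm ((n : ℝ) + 1) β]
  simp_rw [heq]
  have hpow : Tendsto (fun n : ℕ => (1 - β * δ) ^ (n + 1)) atTop (nhds 0) := by
    have := tendsto_pow_atTop_nhds_zero_of_abs_lt_one h1
    exact this.comp (tendsto_add_atTop_nat 1)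
  have h2 : Tendsto (fun n : ℕ => (1 - (1 - β * δ) ^ (n + 1)) / β) atTop
      (nhds ((1 - 0) / β)) := (tendsto_const_nhds.sub hpow).div_const β
  have h3 := (tendsto_natCast_div_add_atTop (1 : ℝ)).mul h2
  simpa using h3

private lemma key_tendsto {c : ℝ} (hc0 : 0 < c) (hc1 : c < 1) :
    Tendsto (fun n : ℕ => (n : ℝ) * ∫ t in (0:ℝ)..(π / 2), (1 - c * Real.sin t) ^ n)
      atTop (nhds (1 / c)) := by
  have hπ : (1:ℝ) < π / 2 := by nlinarith [Real.pi_gt_three]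
  have hint : ∀ (u v : ℝ) (n : ℕ),
      IntervalIntegrable (fun t : ℝ => (1 - c * Real.sin t) ^ n) MeasureTheory.volume u v := by
    intro u v n
    exact ((continuous_const.sub (continuous_const.mul Real.continuous_sin)).pow n).intervalIntegrable u v
  rw [tendsto_order]
  constructor
  · -- lower bound
    intro b hb
    have hL : Tendsto (fun n : ℕ => (n : ℝ) * ∫ t in (0:ℝ)..1, (1 - c * t) ^ n)
        atTop (nhds (1 / c)) := by
      apply main_term_tendsto hc0
      rw [abs_lt]; constructor <;> nlinarith
    have hle : ∀ n : ℕ, (n : ℝ) * ∫ t in (0:ℝ)..1, (1 - c * t) ^ n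
        ≤ (n : ℝ) * ∫ t in (0:ℝ)..(π / 2), (1 - c * Real.sin t) ^ n := by
      intro n
      apply mul_le_mul_of_nonneg_left _ (Nat.cast_nonneg n)
      have hsplit : ∫ t in (0:ℝ)..(π / 2), (1 - c * Real.sin t) ^ n
          = (∫ t in (0:ℝ)..1, (1 - c * Real.sin t) ^ n)
            + ∫ t in (1:ℝ)..(π / 2), (1 - c * Real.sin t) ^ n :=
        (intervalIntegral.integral_add_adjacent_intervals (hint 0 1 n) (hint 1 (π/2) n)).symm
      have h1 : ∫ t in (0:ℝ)..1, (1 - c * t) ^ n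
          ≤ ∫ t in (0:ℝ)..1, (1 - c * Real.sin t) ^ n := by
        apply intervalIntegral.integral_mono_on (by norm_num)
          (by apply Continuous.intervalIntegrable; exact (continuous_const.sub (continuous_const.mul continuous_id')).pow n) (hint 0 1 n)
        intro t ht
        apply pow_le_pow_left₀ _ _ n
        · nlinarith [Real.sin_le ht.1, ht.2]
        · nlinarith [Real.sin_le ht.1]
      have h2 : (0:ℝ) ≤ ∫ t in (1:ℝ)..(π / 2), (1 - c * Real.sin t) ^ n := by
        apply intervalIntegral.integral_nonneg hπ.le
        intro t ht
        have h3 : 0 < 1 - c * Real.sin t := by nlinarith [Real.sin_le_one t]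
        positivity
      linarith [h1, h2, hsplit.ge, hsplit.le]
    have := hL.eventually (eventually_gt_nhds hb)
    filter_upwards [this] with n hn
    exact lt_of_lt_of_le hn (hle n)
  · -- upper bound
    intro b hb
    have hcb : 1 < c * b := by
      rw [gt_iff_lt, div_lt_iff₀ hc0] at hb
      nlinarith
    have hb0 : 0 < b := lt_trans (by positivity) hb
    have hcbpos : 0 < c * b := by positivity
    have hx : 0 < 1 - 1 / (c * b) := by
      rw [sub_pos, div_lt_one hcbpos]; exact hcb
    obtain ⟨δ, hδ0, hδ1, hδsq⟩ : ∃ δ : ℝ, 0 < δ ∧ δ ≤ 1 ∧ δ ^ 2 ≤ 2 * (1 - 1 / (c * b)) := by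
      refine ⟨min 1 (Real.sqrt (2 * (1 - 1 / (c * b)))),
        lt_min one_pos (Real.sqrt_pos.2 (by positivity)), min_le_left _ _, ?_⟩
      calc (min 1 (Real.sqrt (2 * (1 - 1 / (c * b))))) ^ 2
          ≤ (Real.sqrt (2 * (1 - 1 / (c * b)))) ^ 2 := by
            apply pow_le_pow_left₀ (le_min zero_le_one (Real.sqrt_nonneg _)) (min_le_right _ _)
        _ = 2 * (1 - 1 / (c * b)) := Real.sq_sqrt (by positivity)
    obtain ⟨β, hβdef⟩ : ∃ β : ℝ, β = c * (1 - δ ^ 2 / 4) := ⟨_, rfl⟩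
    have hβpos : 0 < β := by
      rw [hβdef]; apply mul_pos hc0; nlinarith
    have hβc : β ≤ c := by nlinarith
    have h1βδ : |1 - β * δ| < 1 := by
      rw [abs_lt]
      constructor <;> nlinarith [mul_pos hβpos hδ0]
    have hβb : 1 / β < b := by
      rw [div_lt_iff₀ hβpos, hβdef]
      have h4 : (1 / (c * b)) * (c * b) = 1 := by field_simp
      nlinarith [mul_le_mul_of_nonneg_left hδsq hcbpos.le, h4, hcb]
    obtain ⟨r, hrdef⟩ : ∃ r : ℝ, r = 1 - c * Real.sin δ := ⟨_, rfl⟩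
    have hsinδpos : 0 < Real.sin δ := Real.sin_pos_of_pos_of_lt_pi hδ0 (by nlinarith [Real.pi_gt_three])
    have hsinδ1 : Real.sin δ ≤ 1 := Real.sin_le_one δ
    have hr0 : 0 ≤ r := by nlinarith
    have hr1 : r < 1 := by nlinarith
    have hU : Tendsto (fun n : ℕ => (n : ℝ) * (∫ t in (0:ℝ)..δ, (1 - β * t) ^ n)
        + (π / 2 - δ) * ((n : ℝ) * r ^ n)) atTop (nhds (1 / β + (π / 2 - δ) * 0)) := by
      exact (main_term_tendsto hβpos h1βδ).add
        ((tendsto_self_mul_const_pow_of_lt_one hr0 hr1).const_mul _)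
    have hlim : (1 / β + (π / 2 - δ) * 0) < b := by simpa using hβb
    have hle : ∀ n : ℕ, (n : ℝ) * ∫ t in (0:ℝ)..(π / 2), (1 - c * Real.sin t) ^ n
        ≤ (n : ℝ) * (∫ t in (0:ℝ)..δ, (1 - β * t) ^ n)
          + (π / 2 - δ) * ((n : ℝ) * r ^ n) := by
      intro n
      have hδπ : δ ≤ π / 2 := le_trans hδ1 hπ.le
      have hsplit : ∫ t in (0:ℝ)..(π / 2), (1 - c * Real.sin t) ^ n
          = (∫ t in (0:ℝ)..δ, (1 - c * Real.sin t) ^ n)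
            + ∫ t in δ..(π / 2), (1 - c * Real.sin t) ^ n :=
        (intervalIntegral.integral_add_adjacent_intervals (hint 0 δ n) (hint δ (π/2) n)).symm
      have h1 : ∫ t in (0:ℝ)..δ, (1 - c * Real.sin t) ^ n
          ≤ ∫ t in (0:ℝ)..δ, (1 - β * t) ^ n := by
        apply intervalIntegral.integral_mono_on hδ0.le (hint 0 δ n)
          (by apply Continuous.intervalIntegrable
              exact (continuous_const.sub (continuous_const.mul continuous_id')).pow n)
        intro t ht
        apply pow_le_pow_left₀
        · have := Real.sin_le ht.1
          nlinarith [ht.2, hδ1, hc1, Real.le_sin (le_refl (0:ℝ))]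
        · -- 1 - c sin t ≤ 1 - β t, i.e. β t ≤ c sin t
          rcases eq_or_lt_of_le ht.1 with h | h
          · simp [← h, hβdef]
          · have hsin : t - t ^ 3 / 4 < Real.sin t := by
                have := Real.sin_gt_sub_cube h; linarith [pow_pos h 3]
            have h3 : t ^ 2 ≤ δ ^ 2 := pow_le_pow_left₀ ht.1 ht.2 2
            have h2 : t * (1 - δ ^ 2 / 4) ≤ t - t ^ 3 / 4 := by
              linarith [mul_nonneg h.le (sub_nonneg.2 h3)]
            rw [hβdef]
            linarith [mul_le_mul_of_nonneg_left h2 hc0.le,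
              mul_le_mul_of_nonneg_left hsin.le hc0.le]
      have h2 : ∫ t in δ..(π / 2), (1 - c * Real.sin t) ^ n ≤ (π / 2 - δ) * r ^ n := by
        have : ∫ t in δ..(π / 2), (1 - c * Real.sin t) ^ n ≤ ∫ _t in δ..(π / 2), r ^ n := by
          apply intervalIntegral.integral_mono_on hδπ (hint δ (π/2) n)
            (continuous_const.intervalIntegrable δ (π/2))
          intro t ht
          apply pow_le_pow_left₀
          · linarith [mul_le_mul_of_nonneg_left (Real.sin_le_one t) hc0.le, hc1]
          · have hmono : Real.sin δ ≤ Real.sin t := by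
              apply Real.strictMonoOn_sin.monotoneOn _ _ ht.1
              · constructor <;> linarith [hδ0, hδ1, hπ, Real.pi_pos]
              · constructor <;> linarith [hδ0, hδ1, hπ, Real.pi_pos, ht.1, ht.2]
            rw [hrdef]
            linarith [mul_le_mul_of_nonneg_left hmono hc0.le]
        rw [intervalIntegral.integral_const] at this
        calc ∫ t in δ..(π / 2), (1 - c * Real.sin t) ^ n ≤ (π / 2 - δ) • r ^ n := this
          _ = (π / 2 - δ) * r ^ n := smul_eq_mul _ _
      calc (n : ℝ) * ∫ t in (0:ℝ)..(π / 2), (1 - c * Real.sin t) ^ n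
          = (n : ℝ) * ((∫ t in (0:ℝ)..δ, (1 - c * Real.sin t) ^ n)
            + ∫ t in δ..(π / 2), (1 - c * Real.sin t) ^ n) := by rw [hsplit]
        _ ≤ (n : ℝ) * ((∫ t in (0:ℝ)..δ, (1 - β * t) ^ n) + (π / 2 - δ) * r ^ n) := by
            apply mul_le_mul_of_nonneg_left _ (Nat.cast_nonneg n)
            linarith
        _ = (n : ℝ) * (∫ t in (0:ℝ)..δ, (1 - β * t) ^ n)
            + (π / 2 - δ) * ((n : ℝ) * r ^ n) := by ring
    have := hU.eventually (eventually_lt_nhds hlim)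
    filter_upwards [this] with n hn
    exact lt_of_le_of_lt (hle n) hn

private lemma semicircle_eq (c : ℝ) (n : ℕ) :
    ∫ θ in (-(π / 2))..(π / 2), (1 - c * Real.cos θ) ^ n
      = 2 * ∫ t in (0:ℝ)..(π / 2), (1 - c * Real.sin t) ^ n := by
  have hint : ∀ u v : ℝ, IntervalIntegrable (fun θ : ℝ => (1 - c * Real.cos θ) ^ n)
      MeasureTheory.volume u v := fun u v =>
    ((continuous_const.sub (continuous_const.mul Real.continuous_cos)).pow n).intervalIntegrable u v
  have hsplit := intervalIntegral.integral_add_adjacent_intervals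
    (hint (-(π/2)) 0) (hint 0 (π/2))
  have hneg : ∫ θ in (-(π/2))..(0:ℝ), (1 - c * Real.cos θ) ^ n
      = ∫ θ in (0:ℝ)..(π/2), (1 - c * Real.cos θ) ^ n := by
    have := intervalIntegral.integral_comp_neg (a := 0) (b := π/2)
      (fun θ : ℝ => (1 - c * Real.cos θ) ^ n)
    simp only [Real.cos_neg, neg_zero] at this
    rw [← this]
  have hcs : ∫ θ in (0:ℝ)..(π/2), (1 - c * Real.cos θ) ^ n
      = ∫ t in (0:ℝ)..(π/2), (1 - c * Real.sin t) ^ n := by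
    have := intervalIntegral.integral_comp_sub_left (a := 0) (b := π/2)
      (fun t : ℝ => (1 - c * Real.sin t) ^ n) (π/2)
    simp only [Real.sin_pi_div_two_sub, sub_self, sub_zero] at this
    rw [← this]
  rw [← hsplit, hneg, hcs]
  ring

/-- Laplace asymptotics on the semicircle:
`J_n = (1/π)∫_{-π/2}^{π/2}(1 − 2a cos θ + a²)^n dθ` satisfies
`(πna) J_n / (1+a²)^{n+1} → 1`. -/
theorem laplace_semicircle (a : ℝ) (ha : 1 < a) :
    Filter.Tendsto
      (fun n : ℕ =>
        (Real.pi * n * a) *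
          ((1 / Real.pi) *
            ∫ θ in (-(Real.pi / 2))..(Real.pi / 2), (1 - 2 * a * Real.cos θ + a ^ 2) ^ n) /
          (1 + a ^ 2) ^ (n + 1))
      Filter.atTop (nhds 1) := by
  have ha2 : (0:ℝ) < 1 + a ^ 2 := by positivity
  have hc0 : 0 < 2 * a / (1 + a ^ 2) := by positivity
  have hc1 : 2 * a / (1 + a ^ 2) < 1 := by
    rw [div_lt_one ha2]; nlinarith
  have hkey := key_tendsto hc0 hc1
  have heq : ∀ n : ℕ,
      (Real.pi * n * a) *
          ((1 / Real.pi) *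
            ∫ θ in (-(Real.pi / 2))..(Real.pi / 2), (1 - 2 * a * Real.cos θ + a ^ 2) ^ n) /
          (1 + a ^ 2) ^ (n + 1)
        = (2 * a / (1 + a ^ 2)) *
            ((n : ℝ) * ∫ t in (0:ℝ)..(π / 2), (1 - (2 * a / (1 + a ^ 2)) * Real.sin t) ^ n) := by
    intro n
    have h1 : ∀ θ : ℝ, (1 - 2 * a * Real.cos θ + a ^ 2 : ℝ)
        = (1 + a ^ 2) * (1 - (2 * a / (1 + a ^ 2)) * Real.cos θ) := by
      intro θ; field_simp; ring
    simp_rw [h1, mul_pow, intervalIntegral.integral_const_mul, semicircle_eq]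
    have hπ := Real.pi_ne_zero
    have hpow : ((1:ℝ) + a ^ 2) ^ n ≠ 0 := by positivity
    rw [pow_succ]
    field_simp
    ring
  have h2 : (2 * a / (1 + a ^ 2)) * (1 / (2 * a / (1 + a ^ 2))) = 1 := by
    field_simp
  have hfin := hkey.const_mul (2 * a / (1 + a ^ 2))
  rw [h2] at hfin
  exact hfin.congr (fun n => (heq n).symm)
end
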